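/- Suppose nonnegative integers a, b, s, t satisfy s = t + 3 = (a + b − 5)/2 and (a − 3b + 3)² − 2(2b − 3)² + 94 = 0. Then α₀ = α₆, α₁ = α₅, and α₂ = α₄, where α₀ = a+b+s+t+8, α₁ = a+b+s+t+7, α₂ = C(a+1,2) + C(b+1,2) + C(s+3,2) + C(t+2,2) + 4, α₄ = (s+2) + (a+b+2)(t+1) + ab, α₅ = a + b + 2(s+2), α₆ = 2(a+b). -/
import Mathlib

lemma two_mul_choose_two (n : ℕ) : 2 * (n + 1).choose 2 = (n + 1) * n := by
  rw [Nat.choose_two_right, Nat.add_sub_cancel]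
  obtain ⟨k, hk⟩ := Nat.even_mul_succ_self n
  rw [mul_comm (n + 1) n, hk]
  omega

/-- If s = t + 3 = (a+b−5)/2 and (a−3b+3)² − 2(2b−3)² + 94 = 0, then
α₀ = α₆, α₁ = α₅ and α₂ = α₄ for the tree T(a,b,s,t). -/
theorem stmt12 (a b s t : ℕ) (hst : s = t + 3) (hs : 2 * s + 5 = a + b)
    (hpell : ((a : ℤ) - 3 * b + 3) ^ 2 - 2 * (2 * (b : ℤ) - 3) ^ 2 + 94 = 0) :
    (a + b + s + t + 8 = 2 * (a + b)) ∧
    (a + b + s + t + 7 = a + b + 2 * (s + 2)) ∧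
    ((a + 1).choose 2 + (b + 1).choose 2 + (s + 3).choose 2 + (t + 2).choose 2 + 4
      = (s + 2) + (a + b + 2) * (t + 1) + a * b) := by
  refine ⟨by omega, by omega, ?_⟩
  have h1 : 2 * ((a + 1).choose 2 : ℤ) = ((a : ℤ) + 1) * a := by
    exact_mod_cast congrArg (Nat.cast : ℕ → ℤ) (two_mul_choose_two a)
  have h2 : 2 * ((b + 1).choose 2 : ℤ) = ((b : ℤ) + 1) * b := by
    exact_mod_cast congrArg (Nat.cast : ℕ → ℤ) (two_mul_choose_two b)
  have h3 : 2 * ((s + 3).choose 2 : ℤ) = ((s : ℤ) + 3) * ((s : ℤ) + 2) := by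
    have := congrArg (Nat.cast : ℕ → ℤ) (two_mul_choose_two (s + 2))
    push_cast at this ⊢
    linarith [this]
  have h4 : 2 * ((t + 2).choose 2 : ℤ) = ((t : ℤ) + 2) * ((t : ℤ) + 1) := by
    have := congrArg (Nat.cast : ℕ → ℤ) (two_mul_choose_two (t + 1))
    push_cast at this ⊢
    linarith [this]
  have hsZ : (2 : ℤ) * s + 5 = a + b := by exact_mod_cast hs
  have hstZ : (s : ℤ) = t + 3 := by exact_mod_cast hst
  have key : (4 : ℤ) * ((a + 1).choose 2 + (b + 1).choose 2 + (s + 3).choose 2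
        + (t + 2).choose 2 + 4)
      = 4 * (((s : ℤ) + 2) + ((a : ℤ) + b + 2) * ((t : ℤ) + 1) + (a : ℤ) * b) := by
    linear_combination 2 * h1 + 2 * h2 + 2 * h3 + 2 * h4 + hpell
      + (-(a + b + 2 * (s : ℤ) - 4 * t - 3)) * hsZ + (6 * (s : ℤ) - 2 * t + 28) * hstZ
  have keyN : 4 * ((a + 1).choose 2 + (b + 1).choose 2 + (s + 3).choose 2 + (t + 2).choose 2 + 4)
      = 4 * ((s + 2) + (a + b + 2) * (t + 1) + a * b) := by exact_mod_cast key
  omega
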